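/- Let Q1 and Q2 be probability measures on the real line. Suppose there exists a dense subset D of ℝ such that for all intervals A = (x,y] and B = (y,z] with endpoints x < y < z in D, one has Q1(B)·Q2(A) ≤ Q1(A)·Q2(B). Then there exist a σ-finite measure μ on ℝ and densities g1 = dQ1/dμ, g2 = dQ2/dμ such that g2/g1 is nondecreasing on the set {g1 + g2 > 0}; that is, Q1 ≤_lr Q2. -/

import Mathlib

open MeasureTheory Set Filter

noncomputable section

/-- `g` is a (measurable, nonnegative) density of `Q` with respect to `μ`,
i.e. `Q B = ∫_B g dμ` for all Borel sets `B`. -/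
def IsDensity (Q μ : Measure ℝ) (g : ℝ → ENNReal) : Prop :=
  Measurable g ∧ ∀ B : Set ℝ, MeasurableSet B → Q B = ∫⁻ x in B, g x ∂μ

/-- Likelihood ratio order `Q1 ≤_lr Q2`: there exist a σ-finite measure `μ` and densities
`g1 = dQ1/dμ`, `g2 = dQ2/dμ` such that the ratio `g2/g1` (with values in `[0,∞]`)
is nondecreasing on the set `{g1 + g2 > 0}`. -/
def LikelihoodRatioLE (Q1 Q2 : Measure ℝ) : Prop :=
  ∃ (μ : Measure ℝ) (g1 g2 : ℝ → ENNReal), SigmaFinite μ ∧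
    IsDensity Q1 μ g1 ∧ IsDensity Q2 μ g2 ∧
    ∀ x y : ℝ, x ≤ y → 0 < g1 x + g2 x → 0 < g1 y + g2 y →
      g2 x / g1 x ≤ g2 y / g1 y

open Topology Function Metric ProbabilityTheory

section Aux

lemma aux_neBot {D : Set ℝ} (hD : Dense D) {a b : ℝ} (hab : a < b) :
    (𝓝[D ∩ Ioo a b] a).NeBot := by
  have h1 : Ioo a b ⊆ closure (Ioo a b ∩ D) := hD.open_subset_closure_inter isOpen_Ioo
  have h2 : closure (Ioo a b) ⊆ closure (Ioo a b ∩ D) := closure_minimal h1 isClosed_closure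
  have h3 : a ∈ closure (Ioo a b) := by
    rw [closure_Ioo hab.ne]; exact ⟨le_rfl, hab.le⟩
  rw [inter_comm]
  exact mem_closure_iff_nhdsWithin_neBot.mp (h2 h3)

/-- Extension of the adjacent-interval cross inequality from a dense set to all of `ℝ`,
including left limits, for right-continuous monotone functions. -/
lemma ext_ineq (F G : ℝ → ℝ) (hF : Monotone F) (hG : Monotone G)
    (hFrc : ∀ p : ℝ, ContinuousWithinAt F (Ici p) p)
    (hGrc : ∀ p : ℝ, ContinuousWithinAt G (Ici p) p)
    (D : Set ℝ) (hD : Dense D)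
    (hadj : ∀ x y z : ℝ, x ∈ D → y ∈ D → z ∈ D → x < y → y < z →
      (G y - G x) * ((F z + G z) - (F y + G y)) ≤ ((F y + G y) - (F x + G x)) * (G z - G y)) :
    ∀ p q s t : ℝ, p < q → q < s → s < t →
      (G q - leftLim G p) * ((F t + G t) - (leftLim F s + leftLim G s)) ≤
      ((F q + G q) - (leftLim F p + leftLim G p)) * (G t - leftLim G s) := by
  set H : ℝ → ℝ := fun u => F u + G u with hH
  have hHmono : Monotone H := fun u v huv => add_le_add (hF huv) (hG huv)
  have hGH : ∀ u v : ℝ, u ≤ v → G v - G u ≤ H v - H u := by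
    intro u v huv
    have := hF huv
    simp only [hH]
    linarith
  have hHrc : ∀ p : ℝ, ContinuousWithinAt H (Ici p) p := fun p => (hFrc p).add (hGrc p)
  -- step 1: chaining within D
  have chainD : ∀ a b c d : ℝ, a ∈ D → b ∈ D → c ∈ D → d ∈ D → a < b → b ≤ c → c < d →
      (G b - G a) * (H d - H c) ≤ (H b - H a) * (G d - G c) := by
    intro a b c d ha hb hc hd hab hbc hcd
    have hadj' : ∀ x y z : ℝ, x ∈ D → y ∈ D → z ∈ D → x < y → y < z →
        (G y - G x) * (H z - H y) ≤ (H y - H x) * (G z - G y) := hadj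
    rcases eq_or_lt_of_le hbc with rfl | hbc'
    · exact hadj' a b d ha hb hd hab hcd
    · have h1 := hadj' a b c ha hb hc hab hbc'
      have h2 := hadj' b c d hb hc hd hbc' hcd
      have hHcb : (0:ℝ) ≤ H c - H b := sub_nonneg.2 (hHmono hbc'.le)
      rcases eq_or_lt_of_le hHcb with heq | hpos
      · have hGcb0 : G c - G b = 0 := by
          have h4 := hGH b c hbc'.le
          have h5 : (0:ℝ) ≤ G c - G b := sub_nonneg.2 (hG hbc'.le)
          linarith
        have h3 := hadj' a b d ha hb hd hab (hbc'.trans hcd)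
        have e1 : H c = H b := by linarith
        have e2 : G c = G b := by linarith
        rw [e1, e2]
        exact h3
      · have hnn1 : (0:ℝ) ≤ H d - H c := sub_nonneg.2 (hHmono hcd.le)
        have hnn2 : (0:ℝ) ≤ H b - H a := sub_nonneg.2 (hHmono hab.le)
        have key : (G b - G a) * (H d - H c) * (H c - H b) ≤
            (H b - H a) * (G d - G c) * (H c - H b) := by
          calc (G b - G a) * (H d - H c) * (H c - H b)
              = (G b - G a) * (H c - H b) * (H d - H c) := by ring
            _ ≤ (H b - H a) * (G c - G b) * (H d - H c) := mul_le_mul_of_nonneg_right h1 hnn1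
            _ = (H b - H a) * ((G c - G b) * (H d - H c)) := by ring
            _ ≤ (H b - H a) * ((H c - H b) * (G d - G c)) := mul_le_mul_of_nonneg_left h2 hnn2
            _ = (H b - H a) * (G d - G c) * (H c - H b) := by ring
        exact le_of_mul_le_mul_right key hpos
  -- step 2: extend endpoint a to ℝ
  have ext1 : ∀ a b c d : ℝ, b ∈ D → c ∈ D → d ∈ D → a < b → b < c → c < d →
      (G b - G a) * (H d - H c) ≤ (H b - H a) * (G d - G c) := by
    intro a b c d hb hc hd hab hbc hcd
    haveI := aux_neBot hD hab
    have hsub : D ∩ Ioo a b ⊆ Ici a := fun x hx => hx.2.1.le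
    have tG : Tendsto G (𝓝[D ∩ Ioo a b] a) (𝓝 (G a)) :=
      (hGrc a).mono_left (nhdsWithin_mono a hsub)
    have tH : Tendsto H (𝓝[D ∩ Ioo a b] a) (𝓝 (H a)) :=
      (hHrc a).mono_left (nhdsWithin_mono a hsub)
    refine le_of_tendsto_of_tendsto
      (f := fun a' => (G b - G a') * (H d - H c)) (g := fun a' => (H b - H a') * (G d - G c))
      ((tendsto_const_nhds.sub tG).mul tendsto_const_nhds)
      ((tendsto_const_nhds.sub tH).mul tendsto_const_nhds) ?_
    filter_upwards [self_mem_nhdsWithin] with a' ha'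
    exact chainD a' b c d ha'.1 hb hc hd ha'.2.2 hbc.le hcd
  -- step 3: extend endpoint b
  have ext2 : ∀ a b c d : ℝ, c ∈ D → d ∈ D → a < b → b < c → c < d →
      (G b - G a) * (H d - H c) ≤ (H b - H a) * (G d - G c) := by
    intro a b c d hc hd hab hbc hcd
    haveI := aux_neBot hD hbc
    have hsub : D ∩ Ioo b c ⊆ Ici b := fun x hx => hx.2.1.le
    have tG : Tendsto G (𝓝[D ∩ Ioo b c] b) (𝓝 (G b)) :=
      (hGrc b).mono_left (nhdsWithin_mono b hsub)
    have tH : Tendsto H (𝓝[D ∩ Ioo b c] b) (𝓝 (H b)) :=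
      (hHrc b).mono_left (nhdsWithin_mono b hsub)
    refine le_of_tendsto_of_tendsto
      (f := fun b' => (G b' - G a) * (H d - H c)) (g := fun b' => (H b' - H a) * (G d - G c))
      ((tG.sub tendsto_const_nhds).mul tendsto_const_nhds)
      ((tH.sub tendsto_const_nhds).mul tendsto_const_nhds) ?_
    filter_upwards [self_mem_nhdsWithin] with b' hb'
    exact ext1 a b' c d hb'.1 hc hd (hab.trans hb'.2.1) hb'.2.2 hcd
  -- step 4: extend endpoint c
  have ext3 : ∀ a b c d : ℝ, d ∈ D → a < b → b < c → c < d →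
      (G b - G a) * (H d - H c) ≤ (H b - H a) * (G d - G c) := by
    intro a b c d hd hab hbc hcd
    haveI := aux_neBot hD hcd
    have hsub : D ∩ Ioo c d ⊆ Ici c := fun x hx => hx.2.1.le
    have tG : Tendsto G (𝓝[D ∩ Ioo c d] c) (𝓝 (G c)) :=
      (hGrc c).mono_left (nhdsWithin_mono c hsub)
    have tH : Tendsto H (𝓝[D ∩ Ioo c d] c) (𝓝 (H c)) :=
      (hHrc c).mono_left (nhdsWithin_mono c hsub)
    refine le_of_tendsto_of_tendsto
      (f := fun c' => (G b - G a) * (H d - H c')) (g := fun c' => (H b - H a) * (G d - G c'))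
      (tendsto_const_nhds.mul (tendsto_const_nhds.sub tH))
      (tendsto_const_nhds.mul (tendsto_const_nhds.sub tG)) ?_
    filter_upwards [self_mem_nhdsWithin] with c' hc'
    exact ext2 a b c' d hc'.1 hd hab (hbc.trans hc'.2.1) hc'.2.2
  -- step 5: extend endpoint d
  have ext4 : ∀ a b c d : ℝ, a < b → b < c → c < d →
      (G b - G a) * (H d - H c) ≤ (H b - H a) * (G d - G c) := by
    intro a b c d hab hbc hcd
    haveI := aux_neBot hD (lt_add_one d)
    have hsub : D ∩ Ioo d (d+1) ⊆ Ici d := fun x hx => hx.2.1.le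
    have tG : Tendsto G (𝓝[D ∩ Ioo d (d+1)] d) (𝓝 (G d)) :=
      (hGrc d).mono_left (nhdsWithin_mono d hsub)
    have tH : Tendsto H (𝓝[D ∩ Ioo d (d+1)] d) (𝓝 (H d)) :=
      (hHrc d).mono_left (nhdsWithin_mono d hsub)
    refine le_of_tendsto_of_tendsto
      (f := fun d' => (G b - G a) * (H d' - H c)) (g := fun d' => (H b - H a) * (G d' - G c))
      (tendsto_const_nhds.mul (tH.sub tendsto_const_nhds))
      (tendsto_const_nhds.mul (tG.sub tendsto_const_nhds)) ?_
    filter_upwards [self_mem_nhdsWithin] with d' hd'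
    exact ext3 a b c d' hd'.1 hab hbc (hcd.trans hd'.2.1)
  -- step 6: left limits at s
  have extL1 : ∀ p q s t : ℝ, p < q → q < s → s < t →
      (G q - G p) * (H t - (leftLim F s + leftLim G s)) ≤
      (H q - H p) * (G t - leftLim G s) := by
    intro p q s t hpq hqs hst
    haveI : (𝓝[Ioo q s] s).NeBot := by
      refine mem_closure_iff_nhdsWithin_neBot.mp ?_
      rw [closure_Ioo hqs.ne]
      exact ⟨hqs.le, le_rfl⟩
    have hsub : Ioo q s ⊆ Iio s := fun x hx => hx.2
    have tG : Tendsto G (𝓝[Ioo q s] s) (𝓝 (leftLim G s)) :=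
      (hG.tendsto_leftLim s).mono_left (nhdsWithin_mono s hsub)
    have tF : Tendsto F (𝓝[Ioo q s] s) (𝓝 (leftLim F s)) :=
      (hF.tendsto_leftLim s).mono_left (nhdsWithin_mono s hsub)
    have tH : Tendsto H (𝓝[Ioo q s] s) (𝓝 (leftLim F s + leftLim G s)) := tF.add tG
    refine le_of_tendsto_of_tendsto
      (f := fun s' => (G q - G p) * (H t - H s')) (g := fun s' => (H q - H p) * (G t - G s'))
      (tendsto_const_nhds.mul (tendsto_const_nhds.sub tH))
      (tendsto_const_nhds.mul (tendsto_const_nhds.sub tG)) ?_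
    filter_upwards [self_mem_nhdsWithin] with s' hs'
    exact ext4 p q s' t hpq hs'.1 (hs'.2.trans hst)
  -- step 7: left limits at p
  intro p q s t hpq hqs hst
  haveI : (𝓝[Ioo (p-1) p] p).NeBot := by
    refine mem_closure_iff_nhdsWithin_neBot.mp ?_
    rw [closure_Ioo (by linarith : p - 1 ≠ p)]
    exact ⟨by linarith, le_rfl⟩
  have hsub : Ioo (p-1) p ⊆ Iio p := fun x hx => hx.2
  have tG : Tendsto G (𝓝[Ioo (p-1) p] p) (𝓝 (leftLim G p)) :=
    (hG.tendsto_leftLim p).mono_left (nhdsWithin_mono p hsub)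
  have tF : Tendsto F (𝓝[Ioo (p-1) p] p) (𝓝 (leftLim F p)) :=
    (hF.tendsto_leftLim p).mono_left (nhdsWithin_mono p hsub)
  have tH : Tendsto H (𝓝[Ioo (p-1) p] p) (𝓝 (leftLim F p + leftLim G p)) := tF.add tG
  refine le_of_tendsto_of_tendsto
    (f := fun p' => (G q - G p') * (H t - (leftLim F s + leftLim G s)))
    (g := fun p' => (H q - H p') * (G t - leftLim G s))
    ((tendsto_const_nhds.sub tG).mul tendsto_const_nhds)
    ((tendsto_const_nhds.sub tH).mul tendsto_const_nhds) ?_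
  filter_upwards [self_mem_nhdsWithin] with p' hp'
  exact extL1 p' q s t (hp'.2.trans hpq) hqs hst

lemma aux_div_le_div {a b c d : ENNReal} (h : a * d ≤ c * b) (hb0 : b ≠ 0) (hbt : b ≠ ⊤)
    (hd0 : d ≠ 0) (hdt : d ≠ ⊤) : a / b ≤ c / d := by
  rw [ENNReal.div_le_iff_le_mul (Or.inl hb0) (Or.inl hbt), mul_comm (c / d) b,
    ← mul_div_assoc, ENNReal.le_div_iff_mul_le (Or.inl hd0) (Or.inl hdt), mul_comm b c]
  exact h

end Aux

theorem stmt_2 (Q1 Q2 : Measure ℝ) [IsProbabilityMeasure Q1] [IsProbabilityMeasure Q2]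
    (D : Set ℝ) (hD : Dense D)
    (h : ∀ x y z : ℝ, x ∈ D → y ∈ D → z ∈ D → x < y → y < z →
      Q1 (Ioc y z) * Q2 (Ioc x y) ≤ Q1 (Ioc x y) * Q2 (Ioc y z)) :
    LikelihoodRatioLE Q1 Q2 := by
  classical
  set μ : Measure ℝ := Q1 + Q2 with hμdef
  set F : ℝ → ℝ := fun u => cdf Q1 u with hFdef
  set G : ℝ → ℝ := fun u => cdf Q2 u with hGdef
  have hFmono : Monotone F := (cdf Q1).mono
  have hGmono : Monotone G := (cdf Q2).mono
  have hIoc1 : ∀ p q : ℝ, Q1 (Ioc p q) = ENNReal.ofReal (F q - F p) := by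
    intro p q
    have h1 := (cdf Q1).measure_Ioc p q
    rwa [measure_cdf Q1] at h1
  have hIoc2 : ∀ p q : ℝ, Q2 (Ioc p q) = ENNReal.ofReal (G q - G p) := by
    intro p q
    have h1 := (cdf Q2).measure_Ioc p q
    rwa [measure_cdf Q2] at h1
  -- translate the hypothesis to a real inequality
  have hadj : ∀ x y z : ℝ, x ∈ D → y ∈ D → z ∈ D → x < y → y < z →
      (G y - G x) * ((F z + G z) - (F y + G y)) ≤ ((F y + G y) - (F x + G x)) * (G z - G y) := by
    intro x y z hx hy hz hxy hyz
    have h0 := h x y z hx hy hz hxy hyz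
    rw [hIoc1, hIoc1, hIoc2, hIoc2,
      ← ENNReal.ofReal_mul (sub_nonneg.2 (hFmono hyz.le)),
      ← ENNReal.ofReal_mul (sub_nonneg.2 (hFmono hxy.le))] at h0
    have hreal : (F z - F y) * (G y - G x) ≤ (F y - F x) * (G z - G y) :=
      (ENNReal.ofReal_le_ofReal_iff
        (mul_nonneg (sub_nonneg.2 (hFmono hxy.le)) (sub_nonneg.2 (hGmono hyz.le)))).1 h0
    nlinarith [hreal]
  -- the extended inequality with left limits
  have extL := ext_ineq F G hFmono hGmono
    (fun p => (cdf Q1).right_continuous p) (fun p => (cdf Q2).right_continuous p) D hD hadj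
  -- cross inequality for disjoint closed intervals
  have hIcc1 : ∀ p q : ℝ, Q1 (Icc p q) = ENNReal.ofReal (F q - Function.leftLim F p) := by
    intro p q
    have h1 := (cdf Q1).measure_Icc p q
    rwa [measure_cdf Q1] at h1
  have hIcc2 : ∀ p q : ℝ, Q2 (Icc p q) = ENNReal.ofReal (G q - Function.leftLim G p) := by
    intro p q
    have h1 := (cdf Q2).measure_Icc p q
    rwa [measure_cdf Q2] at h1
  have hμIcc : ∀ p q : ℝ, p ≤ q → μ (Icc p q) =
      ENNReal.ofReal ((F q + G q) - (Function.leftLim F p + Function.leftLim G p)) := by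
    intro p q hpq
    have e1 : (0:ℝ) ≤ F q - Function.leftLim F p :=
      sub_nonneg.2 ((hFmono.leftLim_le le_rfl).trans (hFmono hpq))
    have e2 : (0:ℝ) ≤ G q - Function.leftLim G p :=
      sub_nonneg.2 ((hGmono.leftLim_le le_rfl).trans (hGmono hpq))
    rw [hμdef, Measure.add_apply, hIcc1, hIcc2, ← ENNReal.ofReal_add e1 e2]
    congr 1
    ring
  have hcross : ∀ p q s t : ℝ, p < q → q < s → s < t →
      Q2 (Icc p q) * μ (Icc s t) ≤ μ (Icc p q) * Q2 (Icc s t) := by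
    intro p q s t hpq hqs hst
    rw [hIcc2, hIcc2, hμIcc p q hpq.le, hμIcc s t hst.le,
      ← ENNReal.ofReal_mul
        (sub_nonneg.2 ((hGmono.leftLim_le le_rfl).trans (hGmono hpq.le))),
      ← ENNReal.ofReal_mul]
    · exact ENNReal.ofReal_le_ofReal (extL p q s t hpq hqs hst)
    · have e1 : (0:ℝ) ≤ F q - Function.leftLim F p :=
        sub_nonneg.2 ((hFmono.leftLim_le le_rfl).trans (hFmono hpq.le))
      have e2 : (0:ℝ) ≤ G q - Function.leftLim G p :=
        sub_nonneg.2 ((hGmono.leftLim_le le_rfl).trans (hGmono hpq.le))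
      linarith
  -- measure-theoretic part
  have hQ1le : Q1 ≤ μ := Measure.le_add_right le_rfl
  have hQ2le : Q2 ≤ μ := Measure.le_add_left le_rfl
  have hac1 : Q1 ≪ μ := hQ1le.absolutelyContinuous
  have hac2 : Q2 ≪ μ := hQ2le.absolutelyContinuous
  set f1 : ℝ → ENNReal := Q1.rnDeriv μ with hf1def
  set f2 : ℝ → ENNReal := Q2.rnDeriv μ with hf2def
  have hsum : ∀ᵐ x ∂μ, f1 x + f2 x = 1 := by
    filter_upwards [Measure.rnDeriv_add Q1 Q2 μ, Measure.rnDeriv_self μ] with x h1 h2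
    rw [← h2, h1]; rfl
  set T : Set ℝ := {x | (Tendsto (fun r => Q1 (closedBall x r) / μ (closedBall x r)) (𝓝[>] 0)
        (𝓝 (f1 x))) ∧
      (Tendsto (fun r => Q2 (closedBall x r) / μ (closedBall x r)) (𝓝[>] 0) (𝓝 (f2 x))) ∧
      f1 x + f2 x = 1} with hTdef
  have hT : ∀ᵐ x ∂μ, x ∈ T := by
    filter_upwards [Besicovitch.ae_tendsto_rnDeriv Q1 μ, Besicovitch.ae_tendsto_rnDeriv Q2 μ,
      hsum] with x h1 h2 h3
    exact ⟨h1, h2, h3⟩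
  have hposball : ∀ x ∈ T, ∀ r : ℝ, 0 < r → μ (closedBall x r) ≠ 0 := by
    intro x hx r hr h0
    have hz : ∀ Q : Measure ℝ, Q ≤ μ →
        Tendsto (fun r' => Q (closedBall x r') / μ (closedBall x r')) (𝓝[>] 0) (𝓝 0) := by
      intro Q hQ
      have hev : ∀ᶠ r' in 𝓝[>] (0:ℝ),
          (0:ENNReal) = Q (closedBall x r') / μ (closedBall x r') := by
        filter_upwards [Ioc_mem_nhdsGT_of_mem ⟨le_rfl, hr⟩] with r' hr'
        have hμ0 : μ (closedBall x r') = 0 :=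
          le_antisymm (h0 ▸ measure_mono (closedBall_subset_closedBall hr'.2)) zero_le
        have hQ0 : Q (closedBall x r') = 0 :=
          le_antisymm (hμ0 ▸ Measure.le_iff'.1 hQ (closedBall x r')) zero_le
        rw [hQ0, ENNReal.zero_div]
      exact Tendsto.congr' hev tendsto_const_nhds
    have e1 : f1 x = 0 := tendsto_nhds_unique hx.1 (hz Q1 hQ1le)
    have e2 : f2 x = 0 := tendsto_nhds_unique hx.2.1 (hz Q2 hQ2le)
    have := hx.2.2
    rw [e1, e2, add_zero] at this
    exact zero_ne_one this
  have hmono : ∀ x ∈ T, ∀ y ∈ T, x < y → f2 x ≤ f2 y := by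
    intro x hx y hy hxy
    refine le_of_tendsto_of_tendsto hx.2.1 hy.2.1 ?_
    have h4 : (0:ℝ) ∈ Ico (0:ℝ) ((y - x) / 4) := ⟨le_rfl, by linarith⟩
    filter_upwards [Ioo_mem_nhdsGT_of_mem h4] with r hr
    have hr0 : 0 < r := hr.1
    have hkey := hcross (x - r) (x + r) (y - r) (y + r)
      (by linarith) (by linarith [hr.2]) (by linarith)
    have hx0 : μ (Icc (x - r) (x + r)) ≠ 0 := by
      rw [← Real.closedBall_eq_Icc]; exact hposball x hx r hr0
    have hy0 : μ (Icc (y - r) (y + r)) ≠ 0 := by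
      rw [← Real.closedBall_eq_Icc]; exact hposball y hy r hr0
    rw [Real.closedBall_eq_Icc, Real.closedBall_eq_Icc]
    exact aux_div_le_div (hkey.trans (mul_comm _ _).le) hx0 (measure_ne_top μ _) hy0
      (measure_ne_top μ _)
  -- monotone envelope of the density
  set g : ℝ → ENNReal := fun t => ⨆ s ∈ T ∩ Iic t, f2 s with hgdef
  have hgmono : Monotone g := by
    intro u v huv
    exact biSup_mono fun s hs => ⟨hs.1, hs.2.trans huv⟩
  have hf2le1 : ∀ s ∈ T, f2 s ≤ 1 := fun s hs => hs.2.2 ▸ le_add_self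
  have hgT : ∀ t ∈ T, g t = f2 t := by
    intro t ht
    refine le_antisymm (iSup_le fun s => iSup_le fun hs => ?_)
      (le_biSup _ ⟨ht, mem_Iic.2 le_rfl⟩)
    rcases (mem_Iic.1 hs.2).lt_or_eq with hlt | rfl
    · exact hmono s hs.1 t ht hlt
    · exact le_rfl
  have hgae : g =ᵐ[μ] f2 := by
    filter_upwards [hT] with t ht using hgT t ht
  have hgmeas : Measurable g := hgmono.measurable
  have hd2 : IsDensity Q2 μ g := by
    refine ⟨hgmeas, fun B hB => ?_⟩
    calc Q2 B = ∫⁻ x in B, f2 x ∂μ := (Measure.setLIntegral_rnDeriv hac2 B).symm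
      _ = ∫⁻ x in B, g x ∂μ := lintegral_congr_ae (ae_restrict_of_ae hgae.symm)
  have h1g : (fun t => 1 - g t) =ᵐ[μ] f1 := by
    filter_upwards [hT] with x hx
    rw [hgT x hx]
    exact ENNReal.sub_eq_of_eq_add ((hf2le1 x hx).trans_lt ENNReal.one_lt_top).ne hx.2.2.symm
  have hd1 : IsDensity Q1 μ (fun t => 1 - g t) := by
    refine ⟨measurable_const.sub hgmeas, fun B hB => ?_⟩
    calc Q1 B = ∫⁻ x in B, f1 x ∂μ := (Measure.setLIntegral_rnDeriv hac1 B).symm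
      _ = ∫⁻ x in B, 1 - g x ∂μ := lintegral_congr_ae (ae_restrict_of_ae h1g.symm)
  refine ⟨μ, fun t => 1 - g t, g, inferInstance, hd1, hd2, ?_⟩
  intro x y hxy _ _
  exact ENNReal.div_le_div (hgmono hxy) (tsub_le_tsub_left (hgmono hxy) 1)
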